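/- Let ξ satisfy ξ(y₀) = 0, ξ, ξ' > 0 on (y₀, ∞), with ξ'' ≤ 0 on [y₀, y₂] and ξ'' > 0 on (y₂, ∞). For K₁ ≥ 0 let ŷ₁ ∈ [max{y₂, y₀ + K₁}, ∞) satisfy ξ(ŷ₁) − (ŷ₁ − y₀ − K₁)ξ'(ŷ₁) = 0, and let φ : [z₁, z₂] → (0, ∞) be strictly decreasing. Then for z < z' in [z₁, z₂], the unique maximizers y(z), y(z') of y ↦ (φ(z)(y − y₀) − K)/ξ(y) (equivalently of (y − y₀ − K/φ(z))/ξ(y)) satisfy y(z) ≤ y(z'); i.e. the best-response threshold is increasing in the market rate z. -/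

import Mathlib

open Set

theorem stmt15 (y₀ y₂ K z₁ z₂ : ℝ) (hy₀ : 0 < y₀) (hy₂ : y₀ ≤ y₂) (hK : 0 < K)
    (hz : z₁ ≤ z₂)
    (ξ ξ' ξ'' : ℝ → ℝ)
    (hd1 : ∀ y ∈ Ici y₀, HasDerivAt ξ (ξ' y) y)
    (hd2 : ∀ y ∈ Ici y₀, HasDerivAt ξ' (ξ'' y) y)
    (hξ0 : ξ y₀ = 0)
    (hξpos : ∀ y > y₀, 0 < ξ y)
    (hξ'pos : ∀ y > y₀, 0 < ξ' y)
    (hconc : ∀ y ∈ Icc y₀ y₂, ξ'' y ≤ 0)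
    (hconv : ∀ y > y₂, 0 < ξ'' y)
    (K₁ : ℝ) (hK₁ : 0 ≤ K₁) (yhat₁ : ℝ)
    (hyhat₁mem : max y₂ (y₀ + K₁) ≤ yhat₁)
    (hyhat₁root : ξ yhat₁ - (yhat₁ - y₀ - K₁) * ξ' yhat₁ = 0)
    (φ : ℝ → ℝ) (hφpos : ∀ z ∈ Icc z₁ z₂, 0 < φ z)
    (hφanti : StrictAntiOn φ (Icc z₁ z₂))
    (g : ℝ → ℝ)
    (hg : ∀ z ∈ Icc z₁ z₂, g z ∈ Ioi y₀ ∧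
      IsMaxOn (fun y => (φ z * (y - y₀) - K) / ξ y) (Ioi y₀) (g z) ∧
      ∀ y' ∈ Ioi y₀, IsMaxOn (fun y => (φ z * (y - y₀) - K) / ξ y) (Ioi y₀) y' → y' = g z) :
    ∀ z ∈ Icc z₁ z₂, ∀ z' ∈ Icc z₁ z₂, z < z' → g z ≤ g z' := by
  intro z hzmem z' hz'mem hzz'
  by_contra hcon
  push_neg at hcon
  obtain ⟨ha, hamax, hauniq⟩ := hg z hzmem
  obtain ⟨hb, hbmax, hbuniq⟩ := hg z' hz'mem
  set a := g z
  set b := g z'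
  have hba : b < a := hcon
  have hne : a ≠ b := ne_of_gt hba
  -- strict monotonicity of ξ on Ici y₀
  have hmono : StrictMonoOn ξ (Ici y₀) := by
    apply strictMonoOn_of_deriv_pos (convex_Ici y₀)
    · exact fun y hy => (hd1 y hy).continuousAt.continuousWithinAt
    · intro y hy
      rw [interior_Ici] at hy
      rw [(hd1 y (mem_Ici.2 (le_of_lt (mem_Ioi.1 hy)))).deriv]
      exact hξ'pos y hy
  have hξab : ξ b < ξ a := hmono (mem_Ici.2 (le_of_lt (mem_Ioi.1 hb))) (mem_Ici.2 (le_of_lt (mem_Ioi.1 ha))) hba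
  have hξapos : 0 < ξ a := hξpos a ha
  have hξbpos : 0 < ξ b := hξpos b hb
  -- strict inequalities from uniqueness
  have h1 : (φ z * (b - y₀) - K) / ξ b < (φ z * (a - y₀) - K) / ξ a := by
    have hle : (φ z * (b - y₀) - K) / ξ b ≤ (φ z * (a - y₀) - K) / ξ a := hamax hb
    rcases lt_or_eq_of_le hle with h | h
    · exact h
    · exfalso
      apply hne.symm
      apply hauniq b hb
      intro y hy
      calc (φ z * (y - y₀) - K) / ξ y ≤ (φ z * (a - y₀) - K) / ξ a := hamax hy
        _ = (φ z * (b - y₀) - K) / ξ b := h.symm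
  have h2 : (φ z' * (a - y₀) - K) / ξ a < (φ z' * (b - y₀) - K) / ξ b := by
    have hle : (φ z' * (a - y₀) - K) / ξ a ≤ (φ z' * (b - y₀) - K) / ξ b := hbmax ha
    rcases lt_or_eq_of_le hle with h | h
    · exact h
    · exfalso
      apply hne
      apply hbuniq a ha
      intro y hy
      calc (φ z' * (y - y₀) - K) / ξ y ≤ (φ z' * (b - y₀) - K) / ξ b := hbmax hy
        _ = (φ z' * (a - y₀) - K) / ξ a := h.symm
  set A := (a - y₀) / ξ a with hA
  set B := (b - y₀) / ξ b with hB
  set α := 1 / ξ a with hα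
  set β := 1 / ξ b with hβ
  have e1 : ∀ p : ℝ, (p * (a - y₀) - K) / ξ a = p * A - K * α := by
    intro p; rw [hA, hα]; field_simp
  have e2 : ∀ p : ℝ, (p * (b - y₀) - K) / ξ b = p * B - K * β := by
    intro p; rw [hB, hβ]; field_simp
  rw [e1, e2] at h1 h2
  have hφ : φ z' < φ z := hφanti hzmem hz'mem hzz'
  have hφ'pos : 0 < φ z' := hφpos z' hz'mem
  have hAB : B < A := by nlinarith
  have hαβ : β < α := by nlinarith [mul_pos hφ'pos (sub_pos.2 hAB)]
  rw [hα, hβ] at hαβ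
  have : ξ a < ξ b := by
    have := (div_lt_div_iff₀ hξbpos hξapos).mp hαβ
    linarith
  linarith
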